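/- Let p be a prime, let A ∈ ℤ with gcd(A, p) = 1, and let k ≥ 2 be an integer with k ≡ 2 (mod 3). If p ≠ 3, then S(A x³, p^k) = p^{(2k−1)/3}. If p = 3, then S(A x³, 3^k) = 3^{(2k−1)/3} · (1 + 2·cos(2πA/9)). -/

import Mathlib

noncomputable section

namespace CubicAppendix

/-- `S(Ax³, c) := ∑_{j=0}^{c−1} exp(2πi A j³ / c)`. -/
def S (A : ℤ) (c : ℕ) : ℂ :=
  ∑ j ∈ Finset.range c,
    Complex.exp (2 * Real.pi * Complex.I * (A : ℂ) * (j : ℂ) ^ 3 / (c : ℂ))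

open Complex Finset

def e (c : ℕ) (m : ℤ) : ℂ := Complex.exp (2 * Real.pi * Complex.I * m / c)

lemma e_zero (c : ℕ) : e c 0 = 1 := by simp [e]

lemma e_add (c : ℕ) (m m' : ℤ) : e c (m + m') = e c m * e c m' := by
  rw [e, e, e, ← Complex.exp_add]
  congr 1
  push_cast
  ring

lemma e_int_mul (c : ℕ) (hc : c ≠ 0) (t : ℤ) : e c ((c:ℤ) * t) = 1 := by
  rw [e]
  have : 2 * (Real.pi:ℂ) * Complex.I * ((c:ℤ) * t : ℤ) / c = t * (2 * Real.pi * Complex.I) := by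
    have hc' : (c : ℂ) ≠ 0 := Nat.cast_ne_zero.mpr hc
    push_cast
    field_simp
  rw [this, Complex.exp_int_mul_two_pi_mul_I]

lemma e_period (c : ℕ) (hc : c ≠ 0) (m t : ℤ) : e c (m + c * t) = e c m := by
  rw [e_add, e_int_mul c hc, mul_one]

lemma e_pow (c : ℕ) (m : ℤ) (t : ℕ) : e c (m * t) = (e c m) ^ t := by
  rw [e, e, ← Complex.exp_nat_mul]
  congr 1
  push_cast
  ring

lemma two_pi_I_ne_zero : 2 * (Real.pi:ℂ) * Complex.I ≠ 0 := by
  have hpi : (Real.pi:ℂ) ≠ 0 := by exact_mod_cast Real.pi_ne_zero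
  simp [Complex.I_ne_zero, hpi]

lemma geo (n : ℕ) (hn : n ≠ 0) (m : ℤ) :
    ∑ t ∈ range n, e n (m * t) = if (n:ℤ) ∣ m then (n:ℂ) else 0 := by
  have hn' : (n:ℂ) ≠ 0 := Nat.cast_ne_zero.mpr hn
  have key : e n m = 1 ↔ (n:ℤ) ∣ m := by
    rw [e, Complex.exp_eq_one_iff]
    constructor
    · rintro ⟨j, hj⟩
      refine ⟨j, ?_⟩
      have h1 : 2 * (Real.pi:ℂ) * Complex.I * m = 2 * (Real.pi:ℂ) * Complex.I * (n * j) := by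
        field_simp at hj
        rw [hj]
      have := mul_left_cancel₀ two_pi_I_ne_zero h1
      exact_mod_cast this
    · rintro ⟨j, hj⟩
      exact ⟨j, by rw [hj]; push_cast; field_simp⟩
  simp only [e_pow]
  by_cases h : (n:ℤ) ∣ m
  · rw [if_pos h, (key.mpr h : e n m = 1)]
    simp
  · rw [if_neg h]
    have hz : e n m ≠ 1 := fun h1 => h (key.mp h1)
    rw [geom_sum_eq hz]
    have : (e n m) ^ n = 1 := by
      rw [← e_pow, e, Complex.exp_eq_one_iff]
      exact ⟨m, by push_cast; field_simp⟩
    rw [this, sub_self, zero_div]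


lemma S_eq (A : ℤ) (c : ℕ) : S A c = ∑ j ∈ range c, e c (A * (j:ℤ)^3) := by
  unfold S e
  refine Finset.sum_congr rfl fun j _ => ?_
  congr 1
  push_cast
  ring

/-- cancel common factor: e (n*d) (m*d) = e n m -/
lemma e_mul_cancel (n d : ℕ) (hn : n ≠ 0) (hd : d ≠ 0) (m : ℤ) :
    e (n * d) (m * d) = e n m := by
  unfold e
  congr 1
  have hn' : (n:ℂ) ≠ 0 := Nat.cast_ne_zero.mpr hn
  have hd' : (d:ℂ) ≠ 0 := Nat.cast_ne_zero.mpr hd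
  push_cast
  field_simp

lemma sum_split (a b : ℕ) (f : ℕ → ℂ) :
    ∑ j ∈ range (a * b), f j = ∑ u ∈ range a, ∑ t ∈ range b, f (u + a * t) := by
  rcases Nat.eq_zero_or_pos a with rfl | ha
  · simp
  rw [← Finset.sum_product']
  refine Finset.sum_nbij' (fun j => ((j % a, j / a) : ℕ × ℕ))
    (fun x => x.1 + a * x.2) ?_ ?_ ?_ ?_ ?_
  · intro j hj
    simp only [Finset.mem_range] at hj
    simp only [Finset.mem_product, Finset.mem_range]
    exact ⟨Nat.mod_lt _ ha, Nat.div_lt_iff_lt_mul ha |>.mpr (by rw [mul_comm]; exact hj)⟩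
  · rintro ⟨u, t⟩ hx
    simp only [Finset.mem_product, Finset.mem_range] at hx
    simp only [Finset.mem_range]
    calc u + a * t < a + a * t := by omega
    _ = a * (t + 1) := by ring
    _ ≤ a * b := Nat.mul_le_mul_left a hx.2
  · intro j hj
    simp [Nat.mod_add_div]
  · rintro ⟨u, t⟩ hx
    simp only [Finset.mem_product, Finset.mem_range] at hx
    have h1 : (u + a * t) % a = u := by
      rw [Nat.add_mul_mod_self_left, Nat.mod_eq_of_lt hx.1]
    have h2 : (u + a * t) / a = t := by
      rw [Nat.add_mul_div_left _ _ ha, Nat.div_eq_of_lt hx.1, zero_add]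
    simp [h1, h2]
  · intro j hj
    rw [Nat.mod_add_div]

lemma sum_multiples (p n : ℕ) (hp : 0 < p) (g : ℕ → ℂ) :
    ∑ u ∈ range (p * n), (if p ∣ u then g u else 0) = ∑ w ∈ range n, g (p * w) := by
  rw [← Finset.sum_filter]
  have himg : Finset.filter (fun u => p ∣ u) (range (p * n)) =
      (range n).image (fun w => p * w) := by
    ext u
    simp only [Finset.mem_filter, Finset.mem_range, Finset.mem_image]
    constructor
    · rintro ⟨hu, w, rfl⟩
      exact ⟨w, by exact lt_of_mul_lt_mul_left hu (Nat.zero_le p), rfl⟩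
    · rintro ⟨w, hw, rfl⟩
      exact ⟨by exact Nat.mul_lt_mul_left hp |>.mpr hw, ⟨w, rfl⟩⟩
  rw [himg, Finset.sum_image]
  intro x _ y _ h
  exact Nat.eq_of_mul_eq_mul_left hp h

lemma not_dvd_A (p : ℕ) (hp : p.Prime) (A : ℤ) (hA : Int.gcd A p = 1) :
    ¬ (p:ℤ) ∣ A := by
  intro h
  have : (p:ℤ).natAbs ∣ Int.gcd A p := Nat.dvd_gcd (Int.natAbs_dvd_natAbs.mpr h)
    (Int.natAbs_dvd_natAbs.mpr dvd_rfl)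
  rw [hA] at this
  simp at this
  exact hp.one_lt.ne' (by simpa using this)

lemma dvd_iff (p : ℕ) (hp : p.Prime) (A : ℤ) (hA : Int.gcd A p = 1) (u : ℕ) :
    (p:ℤ)^2 ∣ 3 * A * (u:ℤ)^2 ↔ (p:ℤ) ∣ (u:ℤ) := by
  have hq : Prime (p:ℤ) := Nat.prime_iff_prime_int.mp hp
  have hqA := not_dvd_A p hp A hA
  constructor
  · intro h
    by_cases hp3 : p = 3
    · subst hp3
      obtain ⟨s, hs⟩ := h
      have h3 : (3:ℤ) ∣ A * (u:ℤ)^2 := ⟨s, by push_cast at hs ⊢; linarith⟩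
      have := (hq.dvd_mul.mp (by exact_mod_cast h3)).resolve_left (by exact_mod_cast hqA)
      exact (hq.dvd_of_dvd_pow (by exact_mod_cast this))
    · have h1 : (p:ℤ) ∣ 3 * A * (u:ℤ)^2 := dvd_trans (dvd_pow_self _ two_ne_zero) h
      have h2 : (p:ℤ) ∣ 3 * A ∨ (p:ℤ) ∣ (u:ℤ)^2 := hq.dvd_mul.mp h1
      rcases h2 with h2 | h2
      · rcases hq.dvd_mul.mp h2 with h3 | h3
        · exfalso
          have h4 : p ∣ 3 := by exact_mod_cast h3
          have := (Nat.prime_dvd_prime_iff_eq hp (by norm_num)).mp h4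
          exact hp3 this
        · exact absurd h3 hqA
      · exact hq.dvd_of_dvd_pow h2
  · intro h
    have : (p:ℤ)^2 ∣ (u:ℤ)^2 := pow_dvd_pow_of_dvd h 2
    calc (p:ℤ)^2 ∣ (u:ℤ)^2 := this
    _ ∣ 3 * A * (u:ℤ)^2 := Dvd.intro_left _ rfl

lemma S_rec (p : ℕ) (hp : p.Prime) (A : ℤ) (hA : Int.gcd A p = 1)
    (k : ℕ) (hk : 4 ≤ k) :
    S A (p ^ k) = (p:ℂ)^2 * S A (p ^ (k - 3)) := by
  have hp0 : 0 < p := hp.pos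
  have hpk0 : ∀ m : ℕ, p ^ m ≠ 0 := fun m => pow_ne_zero m hp0.ne'
  have hsplit : p ^ k = p ^ (k-2) * p ^ 2 := by rw [← pow_add]; congr 1; omega
  rw [S_eq]
  conv_lhs => rw [hsplit, sum_split]
  simp only [← hsplit]
  -- inner sum evaluation
  have step1 : ∀ u ∈ range (p^(k-2)),
      ∑ t ∈ range (p^2), e (p^k) (A * ((u + p^(k-2) * t : ℕ) : ℤ)^3)
        = (if p ∣ u then ((p:ℂ)^2) else 0) * e (p^k) (A * (u:ℤ)^3) := by
    intro u _
    have ha2 : (p:ℤ)^(k-2) * (p:ℤ)^(k-2) = (p:ℤ)^k * (p:ℤ)^(k-4) := by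
      rw [← pow_add, ← pow_add]; congr 1; omega
    have ha3 : (p:ℤ)^(k-2) * (p:ℤ)^(k-2) * (p:ℤ)^(k-2) = (p:ℤ)^k * (p:ℤ)^(2*k-6) := by
      rw [← pow_add, ← pow_add, ← pow_add]; congr 1; omega
    have hterm : ∀ t : ℕ, e (p^k) (A * ((u + p^(k-2) * t : ℕ) : ℤ)^3)
        = e (p^k) (A * (u:ℤ)^3) * e (p^2) ((3 * A * (u:ℤ)^2) * (t:ℤ)) := by
      intro t
      have key : A * ((u + p^(k-2) * t : ℕ) : ℤ)^3
          = (A * (u:ℤ)^3 + ((3 * A * (u:ℤ)^2) * (t:ℤ)) * ((p^(k-2) : ℕ) : ℤ))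
            + ((p^k : ℕ) : ℤ) * (3 * A * (u:ℤ) * (p:ℤ)^(k-4) * (t:ℤ)^2
                + A * (p:ℤ)^(2*k-6) * (t:ℤ)^3) := by
        push_cast
        linear_combination (3 * A * (u:ℤ) * (t:ℤ)^2) * ha2 + (A * (t:ℤ)^3) * ha3
      rw [key, e_period _ (hpk0 k), e_add]
      congr 1
      have h2 : p ^ k = p ^ 2 * p ^ (k-2) := by rw [← pow_add]; congr 1; omega
      rw [h2]
      exact e_mul_cancel _ _ (hpk0 2) (hpk0 (k-2)) _
    simp only [hterm, ← Finset.mul_sum]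
    rw [geo _ (hpk0 2) (3 * A * (u:ℤ)^2)]
    have hiff : ((p^2 : ℕ) : ℤ) ∣ 3 * A * (u:ℤ)^2 ↔ p ∣ u := by
      rw [show ((p^2:ℕ):ℤ) = (p:ℤ)^2 by push_cast; ring, dvd_iff p hp A hA u,
        Int.natCast_dvd_natCast]
    rw [mul_comm]
    congr 1
    simp only [hiff]
    split <;> push_cast <;> ring
  rw [Finset.sum_congr rfl step1]
  have hsplit2 : p ^ (k-2) = p * p ^ (k-3) := by
    rw [← pow_succ']; congr 1; omega
  simp only [ite_mul, zero_mul, hsplit2]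
  rw [sum_multiples p (p^(k-3)) hp0 (fun u => (p:ℂ)^2 * e (p^k) (A * (u:ℤ)^3))]
  rw [S_eq, Finset.mul_sum]
  refine Finset.sum_congr rfl fun w _ => ?_
  congr 1
  have harg : A * ((p * w : ℕ) : ℤ)^3 = (A * (w:ℤ)^3) * ((p^3 : ℕ) : ℤ) := by
    push_cast; ring
  have hmod : p ^ k = p ^ (k-3) * p ^ 3 := by rw [← pow_add]; congr 1; omega
  rw [harg, hmod, e_mul_cancel _ _ (hpk0 (k-3)) (hpk0 3)]

lemma base_ne (p : ℕ) (hp : p.Prime) (A : ℤ) (hA : Int.gcd A p = 1) (hp3 : p ≠ 3) :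
    S A (p ^ 2) = (p : ℂ) := by
  have hp0 : 0 < p := hp.pos
  have hpn : p ≠ 0 := hp0.ne'
  have hp2 : p ^ 2 ≠ 0 := pow_ne_zero 2 hpn
  rw [S_eq]
  have hsq : p ^ 2 = p * p := sq p
  conv_lhs => rw [hsq, sum_split]
  simp only [← hsq]
  have step1 : ∀ u ∈ range p,
      ∑ t ∈ range p, e (p^2) (A * ((u + p * t : ℕ) : ℤ)^3)
        = (if p ∣ u then ((p:ℂ)) else 0) * e (p^2) (A * (u:ℤ)^3) := by
    intro u _
    have hterm : ∀ t : ℕ, e (p^2) (A * ((u + p * t : ℕ) : ℤ)^3)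
        = e (p^2) (A * (u:ℤ)^3) * e p ((3 * A * (u:ℤ)^2) * (t:ℤ)) := by
      intro t
      have key : A * ((u + p * t : ℕ) : ℤ)^3
          = (A * (u:ℤ)^3 + ((3 * A * (u:ℤ)^2) * (t:ℤ)) * ((p : ℕ) : ℤ))
            + ((p^2 : ℕ) : ℤ) * (3 * A * (u:ℤ) * (t:ℤ)^2 + A * (p:ℤ) * (t:ℤ)^3) := by
        push_cast
        ring
      rw [key, e_period _ hp2, e_add]
      congr 1
      rw [hsq]
      exact e_mul_cancel _ _ hpn hpn _
    simp only [hterm, ← Finset.mul_sum]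
    rw [geo _ hpn (3 * A * (u:ℤ)^2)]
    have hiff : ((p : ℕ) : ℤ) ∣ 3 * A * (u:ℤ)^2 ↔ p ∣ u := by
      constructor
      · intro h
        have hq : Prime (p:ℤ) := Nat.prime_iff_prime_int.mp hp
        have hqA := not_dvd_A p hp A hA
        rcases hq.dvd_mul.mp h with h2 | h2
        · rcases hq.dvd_mul.mp h2 with h3 | h3
          · exfalso
            have h4 : p ∣ 3 := by exact_mod_cast h3
            exact hp3 ((Nat.prime_dvd_prime_iff_eq hp (by norm_num)).mp h4)
          · exact absurd h3 hqA
        · exact_mod_cast hq.dvd_of_dvd_pow h2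
      · intro h
        have : (p:ℤ) ∣ (u:ℤ) := Int.natCast_dvd_natCast.mpr h
        exact Dvd.dvd.mul_left (this.trans (dvd_pow_self _ two_ne_zero)) _
    rw [mul_comm]
    congr 1
    simp only [hiff]
  rw [Finset.sum_congr rfl step1]
  simp only [ite_mul, zero_mul]
  rw [show range p = range (p*1) by rw [mul_one],
    sum_multiples p 1 hp0 (fun u => (p:ℂ) * e (p^2) (A * (u:ℤ)^3))]
  simp [e_zero]

lemma base_three (A : ℤ) : S A 9 =
    3 * ((1 + 2 * Real.cos (2 * Real.pi * (A : ℝ) / 9) : ℝ) : ℂ) := by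
  rw [S_eq]
  have h9 : (9:ℕ) ≠ 0 := by norm_num
  have e0 : ∀ t : ℤ, e 9 ((9:ℤ) * t) = 1 := fun t => e_int_mul 9 h9 t
  have eA : ∀ t : ℤ, e 9 (A + 9 * t) = e 9 A := fun t => e_period 9 h9 A t
  have eN : ∀ t : ℤ, e 9 (-A + 9 * t) = e 9 (-A) := fun t => e_period 9 h9 (-A) t
  have hsum : ∑ j ∈ range 9, e 9 (A * (j:ℤ)^3)
      = 3 * (1 + (e 9 A + e 9 (-A))) := by
    rw [show (9:ℕ) = 8 + 1 by norm_num]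
    simp only [Finset.sum_range_succ]
    rw [show A * ((0:ℕ):ℤ)^3 = 9 * 0 by push_cast; ring,
        show A * ((1:ℕ):ℤ)^3 = A + 9 * 0 by push_cast; ring,
        show A * ((2:ℕ):ℤ)^3 = -A + 9 * A by push_cast; ring,
        show A * ((3:ℕ):ℤ)^3 = 9 * (3*A) by push_cast; ring,
        show A * ((4:ℕ):ℤ)^3 = A + 9 * (7*A) by push_cast; ring,
        show A * ((5:ℕ):ℤ)^3 = -A + 9 * (14*A) by push_cast; ring,
        show A * ((6:ℕ):ℤ)^3 = 9 * (24*A) by push_cast; ring,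
        show A * ((7:ℕ):ℤ)^3 = A + 9 * (38*A) by push_cast; ring,
        show A * ((8:ℕ):ℤ)^3 = -A + 9 * (57*A) by push_cast; ring]
    rw [e0, eA, eN, e0, eA, eN, e0, eA, eN]
    simp [Finset.sum_range_zero]
    ring
  rw [hsum]
  have hx : e 9 A + e 9 (-A) = 2 * Complex.cos (2 * Real.pi * (A:ℝ) / 9) := by
    unfold e
    have h1 : 2 * (Real.pi:ℂ) * Complex.I * (A:ℤ) / ((9:ℕ):ℂ)
        = ((2 * Real.pi * (A:ℝ) / 9 : ℝ) : ℂ) * Complex.I := by push_cast; ring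
    have h2 : 2 * (Real.pi:ℂ) * Complex.I * ((-A : ℤ):ℂ) / ((9:ℕ):ℂ)
        = -((2 * Real.pi * (A:ℝ) / 9 : ℝ) : ℂ) * Complex.I := by push_cast; ring
    rw [h1, h2, Complex.exp_mul_I, Complex.exp_mul_I]
    simp [Complex.cos_neg, Complex.sin_neg]
    ring
  rw [hx]
  push_cast
  ring

lemma main_aux (p : ℕ) (hp : p.Prime) (A : ℤ) (hA : Int.gcd A p = 1) :
    ∀ k, 2 ≤ k → k % 3 = 2 →
      S A (p ^ k) = (p:ℂ) ^ ((2*k-1)/3) *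
        (if p = 3 then ((1 + 2 * Real.cos (2 * Real.pi * (A:ℝ) / 9) : ℝ) : ℂ) else 1) := by
  intro k
  induction k using Nat.strong_induction_on with
  | _ k ih =>
    intro hk h3
    by_cases hk2 : k = 2
    · subst hk2
      have hexp : (2*2-1)/3 = 1 := by norm_num
      rw [hexp, pow_one]
      by_cases hp3 : p = 3
      · subst hp3
        rw [if_pos rfl, show (3:ℕ)^2 = 9 by norm_num, base_three]
        norm_num
      · rw [if_neg hp3, mul_one, base_ne p hp A hA hp3]
    · have hk5 : 5 ≤ k := by omega
      rw [S_rec p hp A hA k (by omega),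
        ih (k-3) (by omega) (by omega) (by omega)]
      have hexp : (2*k-1)/3 = (2*(k-3)-1)/3 + 2 := by omega
      rw [hexp, pow_add]
      ring


/- Statement 17 -/
theorem stmt17 (p : ℕ) (hp : p.Prime) (A : ℤ) (hA : Int.gcd A p = 1)
    (k : ℕ) (hk : 2 ≤ k) (h3 : k % 3 = 2) :
    (p ≠ 3 → S A (p ^ k) = (p : ℂ) ^ ((2 * k - 1) / 3)) ∧
    (p = 3 → S A (3 ^ k) =
      (3 : ℂ) ^ ((2 * k - 1) / 3) *
        ((1 + 2 * Real.cos (2 * Real.pi * (A : ℝ) / 9) : ℝ) : ℂ)) := by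
  constructor
  · intro hp3
    have h := main_aux p hp A hA k hk h3
    rw [if_neg hp3, mul_one] at h
    exact h
  · intro hp3
    subst hp3
    have h := main_aux 3 hp A hA k hk h3
    rw [if_pos rfl] at h
    have h3c : ((3:ℕ):ℂ) = (3:ℂ) := by norm_num
    rw [h3c] at h
    exact h

end CubicAppendix
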